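/- Let $Y_t = f_t + Z_t$ with piecewise-constant $f$ having change-points $\eta_1 < \cdots < \eta_N$, and let $\mathcal{S} = \{S_1, \ldots, S_R\}$ be any (random) collection of intervals each of which satisfies $D_{S_i} > \lambda_\alpha$. Then $P(\exists i \in \{1,\ldots,R\}\ \forall j \in \{1,\ldots,N\}: [\eta_j, \eta_j+1] \not\subseteq S_i) \le P(\|\mathrm{sign}(Z)\|_{\mathcal{I}^a} > \lambda_\alpha)$. -/

import Mathlib

open MeasureTheory

/-- Scaled partial sum statistic `U_{s,e}(x)`. -/
noncomputable def U (x : ℕ → ℝ) (s e : ℕ) : ℝ :=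
  (∑ t ∈ Finset.Icc s e, x t) / Real.sqrt ((e : ℝ) - s + 1)

/-- Multiresolution sup-norm of `x` over a finite collection of intervals. -/
noncomputable def mnorm (x : ℕ → ℝ) (I : Finset (ℕ × ℕ)) : ℝ :=
  sSup ((fun p : ℕ × ℕ => |U x p.1 p.2|) '' ↑I)

/-- `𝓘ᵃ`: all subintervals of `{1,…,T}` of length at least 2. -/
def Ia (T : ℕ) : Finset (ℕ × ℕ) :=
  ((Finset.Icc 1 T) ×ˢ (Finset.Icc 1 T)).filter fun p => p.1 < p.2

/-- `𝓘ᵃ_{[s,e]}`: all subintervals of `[s,e]` of length at least 2. -/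
def IaSub (s e : ℕ) : Finset (ℕ × ℕ) :=
  ((Finset.Icc s e) ×ˢ (Finset.Icc s e)).filter fun p => p.1 < p.2

/-- The RNSP deviation measure `D_{[s,e]}`: the smallest multiresolution
sup-norm of the residual signs over all constant level fits (by Proposition 1
this infimum over all real levels equals the minimum over the finitely many
candidate levels). -/
noncomputable def Dmeas (Y : ℕ → ℝ) (s e : ℕ) : ℝ :=
  ⨅ c : ℝ, mnorm (fun t => Real.sign (Y t - c)) (IaSub s e)

/-- RNSP coverage guarantee. For any (random) collection of
intervals each with deviation measure exceeding `λ_α`, the probability that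
some interval contains no change-point is at most
`P(‖sign(Z)‖_{𝓘ᵃ} > λ_α)`. -/
theorem stmt15 {Ω : Type*} [MeasurableSpace Ω] (μ : Measure Ω) [IsProbabilityMeasure μ]
    (T N : ℕ) (f : ℕ → ℝ) (Z Y : ℕ → Ω → ℝ)
    (hY : ∀ t ω, Y t ω = f t + Z t ω)
    (η : ℕ → ℕ) (hηmono : StrictMonoOn η (Set.Icc 1 N))
    (hηrange : ∀ j ∈ Finset.Icc 1 N, 1 ≤ η j ∧ η j < T)
    (hcp : ∀ t, 1 ≤ t → t < T → (f t ≠ f (t + 1) ↔ ∃ j ∈ Finset.Icc 1 N, η j = t))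
    (lam : ℝ) (S : Ω → Finset (ℕ × ℕ))
    (hSrange : ∀ ω, ∀ p ∈ S ω, 1 ≤ p.1 ∧ p.1 < p.2 ∧ p.2 ≤ T)
    (hSD : ∀ ω, ∀ p ∈ S ω, lam < Dmeas (fun t => Y t ω) p.1 p.2) :
    μ {ω | ∃ p ∈ S ω, ∀ j ∈ Finset.Icc 1 N, ¬ (p.1 ≤ η j ∧ η j + 1 ≤ p.2)}
      ≤ μ {ω | lam < mnorm (fun t => Real.sign (Z t ω)) (Ia T)} := by
  apply measure_mono
  rintro ω ⟨p, hpS, hnocp⟩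
  obtain ⟨h1, hlt, hT⟩ := hSrange ω p hpS
  have hD := hSD ω p hpS
  -- f is constant on [p.1, p.2]
  have hfconst : ∀ t, p.1 ≤ t → t ≤ p.2 → f t = f p.1 := by
    intro t
    induction t with
    | zero => intro h _; simp [Nat.le_zero.mp h]
    | succ n ih =>
      intro h1n h2n
      rcases Nat.lt_or_ge p.1 (n+1) with hlt' | hge
      · have hn1 : p.1 ≤ n := Nat.lt_succ_iff.mp hlt'
        have hn2 : n ≤ p.2 := le_of_lt (Nat.lt_of_lt_of_le (Nat.lt_succ_self n) h2n)
        have hfn : f n = f p.1 := ih hn1 hn2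
        have hfeq : f n = f (n + 1) := by
          by_contra hne
          obtain ⟨j, hj, hje⟩ := (hcp n (le_trans h1 hn1)
            (lt_of_lt_of_le (Nat.lt_of_succ_le h2n) hT)).mp hne
          exact hnocp j hj ⟨hje ▸ hn1, hje ▸ h2n⟩
        rw [← hfeq, hfn]
      · exact congrArg f (le_antisymm hge h1n)
  -- the infimum is bounded below
  have hbdd : BddBelow (Set.range fun c : ℝ =>
      mnorm (fun t => Real.sign (Y t ω - c)) (IaSub p.1 p.2)) := by
    refine ⟨0, ?_⟩
    rintro y ⟨c, rfl⟩
    apply Real.sSup_nonneg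
    rintro x ⟨q, _, rfl⟩
    exact abs_nonneg _
  have hle : Dmeas (fun t => Y t ω) p.1 p.2
      ≤ mnorm (fun t => Real.sign (Y t ω - f p.1)) (IaSub p.1 p.2) :=
    ciInf_le hbdd (f p.1)
  -- rewrite the residual signs as signs of Z on the subinterval
  have hcongr : mnorm (fun t => Real.sign (Y t ω - f p.1)) (IaSub p.1 p.2)
      = mnorm (fun t => Real.sign (Z t ω)) (IaSub p.1 p.2) := by
    unfold mnorm
    congr 1
    apply Set.image_congr
    rintro ⟨a, b⟩ hq
    simp only [IaSub, Finset.coe_filter, Finset.mem_product, Finset.mem_Icc,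
      Set.mem_setOf_eq, Finset.mem_coe] at hq
    obtain ⟨⟨⟨ha1, ha2⟩, ⟨hb1, hb2⟩⟩, _⟩ := hq
    have hsum : (∑ t ∈ Finset.Icc a b, Real.sign (Y t ω - f p.1))
        = ∑ t ∈ Finset.Icc a b, Real.sign (Z t ω) := by
      apply Finset.sum_congr rfl
      intro t ht
      rw [Finset.mem_Icc] at ht
      have : f t = f p.1 := hfconst t (le_trans ha1 ht.1) (le_trans ht.2 hb2)
      rw [hY t ω, this]
      ring_nf
    simp only [U]
    rw [hsum]
  -- IaSub p.1 p.2 ⊆ Ia T and monotonicity of mnorm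
  have hsub : (IaSub p.1 p.2 : Finset (ℕ × ℕ)) ⊆ Ia T := by
    intro q hq
    simp only [IaSub, Ia, Finset.mem_filter, Finset.mem_product, Finset.mem_Icc] at hq ⊢
    obtain ⟨⟨⟨ha1, ha2⟩, ⟨hb1, hb2⟩⟩, hab⟩ := hq
    exact ⟨⟨⟨le_trans h1 ha1, le_trans ha2 hT⟩, ⟨le_trans h1 hb1, le_trans hb2 hT⟩⟩, hab⟩
  have hne : ((fun q : ℕ × ℕ => |U (fun t => Real.sign (Z t ω)) q.1 q.2|) ''
      ↑(IaSub p.1 p.2)).Nonempty := by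
    refine ⟨_, ⟨p, ?_, rfl⟩⟩
    simp only [IaSub, Finset.coe_filter, Finset.mem_product, Finset.mem_Icc,
      Set.mem_setOf_eq, Finset.mem_coe]
    exact ⟨⟨⟨le_refl _, le_of_lt hlt⟩, ⟨le_of_lt hlt, le_refl _⟩⟩, hlt⟩
  have hmono : mnorm (fun t => Real.sign (Z t ω)) (IaSub p.1 p.2)
      ≤ mnorm (fun t => Real.sign (Z t ω)) (Ia T) := by
    apply csSup_le_csSup _ hne
    · exact Set.image_mono (by exact_mod_cast hsub)
    · exact ((Ia T).finite_toSet.image _).bddAbove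
  calc lam < Dmeas (fun t => Y t ω) p.1 p.2 := hD
    _ ≤ _ := hle
    _ = _ := hcongr
    _ ≤ _ := hmono
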